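/- Let c > 0 and d ≥ 1 an integer. Suppose f_k : (0,∞) → [0,∞) for k ≥ 0 satisfy f₀(t) = 1 for all t, and f_{k+1}(t) ≤ c ∫₀ᵗ r^{d-1} f_k(t − r) dr for all t > 0 and k ≥ 0. Then for all k ≥ 0 and t > 0, f_k(t) ≤ (c·(d−1)!·t^d)^k / (kd)!. -/

import Mathlib

lemma beta_aux (b : ℕ) : ∀ (a : ℕ) (t : ℝ),
    ∫ r in (0:ℝ)..t, r ^ a * (t - r) ^ b
      = (a.factorial * b.factorial / (a + b + 1).factorial) * t ^ (a + b + 1) := by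
  induction b with
  | zero =>
    intro a t
    rw [intervalIntegral.integral_congr (g := fun r : ℝ => r ^ a) (fun r _ => by ring),
      integral_pow]
    rw [Nat.factorial_succ]
    have : ((a:ℝ)+1) ≠ 0 := by positivity
    field_simp
    push_cast
    ring
  | succ b ih =>
    intro a t
    have key : ∫ r in (0:ℝ)..t,
        (r ^ a * (t - r) ^ (b + 1) - ((b + 1 : ℝ) / (a + 1)) * (r ^ (a + 1) * (t - r) ^ b))
        = 0 := by
      have hF : ∀ x ∈ Set.uIcc (0:ℝ) t, HasDerivAt
          (fun x : ℝ => x ^ (a + 1) / (a + 1) * (t - x) ^ (b + 1))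
          (x ^ a * (t - x) ^ (b + 1) - ((b + 1 : ℝ) / (a + 1)) * (x ^ (a + 1) * (t - x) ^ b)) x := by
        intro x _
        have h1 : HasDerivAt (fun x : ℝ => x ^ (a + 1) / (a + 1))
            (x ^ a) x := by
          have := (hasDerivAt_pow (a + 1) x).div_const ((a : ℝ) + 1)
          refine this.congr_deriv ?_
          rw [Nat.add_sub_cancel]
          push_cast
          field_simp
        have h2 : HasDerivAt (fun x : ℝ => (t - x) ^ (b + 1))
            (-((b + 1 : ℝ) * (t - x) ^ b)) x := by
          have hs : HasDerivAt (fun x : ℝ => t - x) (-1) x :=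
            (hasDerivAt_id x).const_sub t |>.congr_deriv (by ring)
          have := (hasDerivAt_pow (b + 1) (t - x)).comp x hs
          simpa [Function.comp_def, mul_comm, mul_assoc] using this
        have := h1.mul h2
        refine this.congr_deriv ?_
        ring
      have hint : IntervalIntegrable
          (fun x : ℝ => x ^ a * (t - x) ^ (b + 1) - ((b + 1 : ℝ) / (a + 1)) * (x ^ (a + 1) * (t - x) ^ b))
          MeasureTheory.volume 0 t := by
        apply Continuous.intervalIntegrable; continuity
      have := intervalIntegral.integral_eq_sub_of_hasDerivAt hF hint
      rw [this]
      simp [zero_pow, Nat.succ_ne_zero]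
    have hint1 : IntervalIntegrable (fun r : ℝ => r ^ a * (t - r) ^ (b + 1))
        MeasureTheory.volume 0 t := by
      apply Continuous.intervalIntegrable; continuity
    have hint2 : IntervalIntegrable (fun r : ℝ => ((b + 1 : ℝ) / (a + 1)) * (r ^ (a + 1) * (t - r) ^ b))
        MeasureTheory.volume 0 t := by
      apply Continuous.intervalIntegrable; continuity
    rw [intervalIntegral.integral_sub hint1 hint2] at key
    have h3 : ∫ r in (0:ℝ)..t, r ^ a * (t - r) ^ (b + 1)
        = ((b + 1 : ℝ) / (a + 1)) * ∫ r in (0:ℝ)..t, r ^ (a + 1) * (t - r) ^ b := by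
      rw [← intervalIntegral.integral_const_mul]
      linarith [key]
    rw [h3, ih (a + 1) t]
    have e1 : a + 1 + b + 1 = a + (b + 1) + 1 := by omega
    rw [e1]
    push_cast [Nat.factorial_succ]
    have h4 : ((a:ℝ)+1) ≠ 0 := by positivity
    have h5 : ((a + (b+1) + 1).factorial : ℝ) ≠ 0 := by positivity
    field_simp


/-- If `f 0 ≡ 1` on `(0,∞)` and `f (k+1) t ≤ c ∫₀ᵗ r^(d-1) f k (t-r) dr`,
then `f k t ≤ (c (d-1)! t^d)^k / (kd)!`. -/
theorem stmt1 (c : ℝ) (hc : 0 < c) (d : ℕ) (hd : 1 ≤ d)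
    (f : ℕ → ℝ → ℝ)
    (hf0 : ∀ t : ℝ, 0 < t → f 0 t = 1)
    (hfnn : ∀ k, ∀ t : ℝ, 0 < t → 0 ≤ f k t)
    (hrec : ∀ k, ∀ t : ℝ, 0 < t →
      f (k + 1) t ≤ c * ∫ r in (0:ℝ)..t, r ^ (d - 1) * f k (t - r)) :
    ∀ k, ∀ t : ℝ, 0 < t →
      f k t ≤ (c * (Nat.factorial (d - 1) : ℝ) * t ^ d) ^ k / (Nat.factorial (k * d) : ℝ) := by
  intro k
  induction k with
  | zero => intro t ht; simp [hf0 t ht]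
  | succ k ih =>
    intro t ht
    set C : ℝ := c * ((d - 1).factorial : ℝ) with hC
    have hCpos : 0 < C := by positivity
    have hRHSnn : 0 ≤ (C * t ^ d) ^ (k + 1) / ((k + 1) * d).factorial := by positivity
    set g : ℝ → ℝ := fun r => r ^ (d - 1) * f k (t - r) with hg
    set h : ℝ → ℝ := fun r => r ^ (d - 1) * ((C * (t - r) ^ d) ^ k / ((k * d).factorial : ℝ))
      with hh
    have hhint : IntervalIntegrable h MeasureTheory.volume 0 t := by
      apply Continuous.intervalIntegrable; fun_prop
    -- value of ∫ h
    have hhval : ∫ r in (0:ℝ)..t, h r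
        = C ^ k / ((k * d).factorial : ℝ) *
          (((d - 1).factorial : ℝ) * ((k * d).factorial : ℝ) / ((d - 1 + k * d + 1).factorial : ℝ)
            * t ^ (d - 1 + k * d + 1)) := by
      have : ∀ r : ℝ, h r = C ^ k / ((k * d).factorial : ℝ) * (r ^ (d - 1) * (t - r) ^ (k * d)) := by
        intro r
        simp only [hh]
        rw [mul_pow, ← pow_mul, mul_comm d k]
        ring
      rw [intervalIntegral.integral_congr (fun r _ => this r),
        intervalIntegral.integral_const_mul, beta_aux (k * d) (d - 1) t]
    have hexp : d - 1 + k * d + 1 = (k + 1) * d := by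
      cases d with
      | zero => omega
      | succ d' => ring_nf; omega
    have key : c * ∫ r in (0:ℝ)..t, g r ≤ (C * t ^ d) ^ (k + 1) / (((k + 1) * d).factorial : ℝ) := by
      by_cases hgi : IntervalIntegrable g MeasureTheory.volume 0 t
      · have hmono : ∫ r in (0:ℝ)..t, g r ≤ ∫ r in (0:ℝ)..t, h r := by
          apply intervalIntegral.integral_mono_ae_restrict ht.le hgi hhint
          have hsub : g ≤ᵐ[MeasureTheory.volume.restrict (Set.Ioo (0:ℝ) t)] h := by
            refine MeasureTheory.ae_restrict_of_forall_mem measurableSet_Ioo ?_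
            intro r hr
            have hr0 : (0:ℝ) < r := hr.1
            have htr : 0 < t - r := by linarith [hr.2]
            have := ih (t - r) htr
            simp only [hg, hh]
            exact mul_le_mul_of_nonneg_left this (by positivity)
          have : MeasureTheory.volume.restrict (Set.Icc (0:ℝ) t)
              = MeasureTheory.volume.restrict (Set.Ioo (0:ℝ) t) :=
            (MeasureTheory.Measure.restrict_congr_set MeasureTheory.Ioo_ae_eq_Icc).symm
          rw [this]
          exact hsub
        calc c * ∫ r in (0:ℝ)..t, g r ≤ c * ∫ r in (0:ℝ)..t, h r := by
              exact mul_le_mul_of_nonneg_left hmono hc.le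
          _ = (C * t ^ d) ^ (k + 1) / (((k + 1) * d).factorial : ℝ) := by
              rw [hhval, hexp, hC]
              have h1 : ((k * d).factorial : ℝ) ≠ 0 :=
                Nat.cast_ne_zero.mpr (Nat.factorial_ne_zero _)
              have h2 : (((k + 1) * d).factorial : ℝ) ≠ 0 :=
                Nat.cast_ne_zero.mpr (Nat.factorial_ne_zero _)
              rw [show (k+1)*d = k*d+d from by ring, pow_add, mul_pow, mul_pow,
                ← pow_mul, show d*(k+1) = k*d+d from by ring, pow_add, pow_succ, mul_pow]
              field_simp
              ring
      · rw [intervalIntegral.integral_undef hgi, mul_zero]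
        positivity
    exact (hrec k t ht).trans key
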